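/- Let (E,A) = (diag(I_{Y¹}, N), diag(A₁, I_{Y²})) be in Weierstraß form with N nilpotent of degree p, and suppose A₁ generates a C₀-semigroup S on Y¹. Then there exists c > 0 such that every classical solution x = (x₁,x₂) of d/dt Ex(t) = Ax(t) + δ(t) on [0,T], with δ = (δ₁,δ₂) ∈ C^{p−1}([0,T]), satisfies max_{0≤t≤T}‖x(t)‖ ≤ c(‖x(0)‖ + ∑_{i=0}^{p−1} max_{0≤t≤T}‖δ^{(i)}(t)‖). In particular the perturbation index of (E,A) equals p. -/

import Mathlib

open Set Filter

/-- for a Weierstraß form `(diag(I,N), diag(A₁,I))` with `N` nilpotent of degree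
`p` and `A₁` generating a `C₀`-semigroup `S`, there is `c > 0` such that every classical solution
of `d/dt Ex = Ax + δ` on `[0,T]` with `δ ∈ C^{p−1}` satisfies
`max_{[0,T]}‖x‖ ≤ c(‖x(0)‖ + ∑_{i<p} max_{[0,T]}‖δ^{(i)}‖)`; the perturbation index equals `p`. -/
theorem stmt_19 {Y1 Y2 : Type*}
    [NormedAddCommGroup Y1] [NormedSpace ℂ Y1] [CompleteSpace Y1]
    [NormedAddCommGroup Y2] [NormedSpace ℂ Y2]
    (A₁ : Y1 →ₗ.[ℂ] Y1) (N : Y2 →L[ℂ] Y2) (p : ℕ) (hp : 1 ≤ p)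
    (hN : N ^ p = 0) (hN' : N ^ (p - 1) ≠ 0)
    -- `A₁` generates the `C₀`-semigroup `S`
    (S : ℝ → Y1 →L[ℂ] Y1) (hS0 : S 0 = 1)
    (hSadd : ∀ s t : ℝ, 0 ≤ s → 0 ≤ t → S (s + t) = (S s).comp (S t))
    (hScont : ∀ y : Y1, ContinuousOn (fun t => S t y) (Ici 0))
    (hSgen : ∀ y : A₁.domain, Tendsto (fun h : ℝ => h⁻¹ • (S h (y : Y1) - (y : Y1)))
      (nhdsWithin 0 (Ioi 0)) (nhds (A₁ y)))
    (T : ℝ) (hT : 0 < T) :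
    ∃ c > 0, ∀ δ : ℝ → Y1 × Y2, ContDiff ℝ (↑(p - 1)) δ →
      ∀ x : ℝ → Y1 × Y2,
        (∀ t ∈ Icc 0 T, ∃ h : (x t).1 ∈ A₁.domain,
          HasDerivAt (fun s => ((x s).1, N ((x s).2)))
            ((A₁ ⟨(x t).1, h⟩ + (δ t).1, (x t).2 + (δ t).2)) t) →
        ∀ t ∈ Icc 0 T, ‖x t‖ ≤ c * (‖x 0‖ +
          ∑ i ∈ Finset.range p,
            sSup ((fun s => ‖iteratedDeriv i δ s‖) '' Icc 0 T)) := by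
  classical
  -- uniform bound for the semigroup on `[0,T]`
  obtain ⟨c₀, hc₀⟩ : ∃ C : ℝ, ∀ s : Icc (0:ℝ) T, ‖S s‖ ≤ C := by
    apply banach_steinhaus
    intro y
    obtain ⟨C, hC⟩ := (isCompact_Icc (a := (0:ℝ)) (b := T)).exists_bound_of_continuousOn
      ((hScont y).mono Icc_subset_Ici_self)
    exact ⟨C, fun s => hC s s.2⟩
  set c₁ : ℝ := max c₀ 1 with hc₁def
  have hc₁1 : (1:ℝ) ≤ c₁ := le_max_right _ _
  have hc₁0 : (0:ℝ) < c₁ := lt_of_lt_of_le one_pos hc₁1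
  have hSb : ∀ s ∈ Icc (0:ℝ) T, ‖S s‖ ≤ c₁ := fun s hs =>
    le_trans (hc₀ ⟨s, hs⟩) (le_max_left _ _)
  -- joint continuity of `(r, v) ↦ S r v` along filters
  have key : ∀ (l : Filter ℝ) (r : ℝ → ℝ) (v : ℝ → Y1) (r₀ : ℝ) (v₀ : Y1),
      r₀ ∈ Icc (0:ℝ) T → Tendsto r l (nhds r₀) → (∀ᶠ u in l, r u ∈ Icc (0:ℝ) T) →
      Tendsto v l (nhds v₀) → Tendsto (fun u => S (r u) (v u)) l (nhds (S r₀ v₀)) := by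
    intro l r v r₀ v₀ hr₀ hr hrI hv
    rw [tendsto_iff_norm_sub_tendsto_zero]
    have h1 : Tendsto (fun u => S (r u) v₀) l (nhds (S r₀ v₀)) := by
      have hrt : Tendsto r l (nhdsWithin r₀ (Ici 0)) :=
        tendsto_nhdsWithin_iff.2 ⟨hr, hrI.mono fun u hu => hu.1⟩
      exact (Tendsto.comp ((hScont v₀) r₀ (Icc_subset_Ici_self hr₀)) hrt)
    have hbd : ∀ᶠ u in l, ‖S (r u) (v u) - S r₀ v₀‖
        ≤ c₁ * ‖v u - v₀‖ + ‖S (r u) v₀ - S r₀ v₀‖ := by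
      refine hrI.mono fun u hu => ?_
      calc ‖S (r u) (v u) - S r₀ v₀‖
          ≤ ‖S (r u) (v u) - S (r u) v₀‖ + ‖S (r u) v₀ - S r₀ v₀‖ :=
            norm_sub_le_norm_sub_add_norm_sub _ _ _
        _ ≤ c₁ * ‖v u - v₀‖ + ‖S (r u) v₀ - S r₀ v₀‖ := by
            gcongr
            rw [← map_sub]
            exact le_trans ((S (r u)).le_opNorm _)
              (mul_le_mul_of_nonneg_right (hSb _ hu) (norm_nonneg _))
    have hg0 : Tendsto (fun u => c₁ * ‖v u - v₀‖ + ‖S (r u) v₀ - S r₀ v₀‖) l (nhds 0) := by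
      have t1 := (tendsto_iff_norm_sub_tendsto_zero.1 hv).const_mul c₁
      have t2 := tendsto_iff_norm_sub_tendsto_zero.1 h1
      simpa using t1.add t2
    exact squeeze_zero' (Eventually.of_forall fun u => norm_nonneg _) hbd hg0
  set K : ℝ := ∑ i ∈ Finset.range p, ‖N ^ i‖ with hKdef
  have hK0 : (0:ℝ) ≤ K := Finset.sum_nonneg fun i _ => norm_nonneg _
  refine ⟨c₁ * (1 + T) + K, by nlinarith, ?_⟩
  intro δ hδ x hx t ht
  set M : ℕ → ℝ := fun i => sSup ((fun s => ‖iteratedDeriv i δ s‖) '' Icc 0 T) with hMdef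
  have hMb : ∀ i < p, ∀ s ∈ Icc (0:ℝ) T, ‖iteratedDeriv i δ s‖ ≤ M i := by
    intro i hip s hs
    have hc : ContinuousOn (fun s => ‖iteratedDeriv i δ s‖) (Icc 0 T) := by
      have := (hδ.continuous_iteratedDeriv i
        (by exact_mod_cast (by omega : i ≤ p - 1))).norm
      exact this.continuousOn
    exact le_csSup (isCompact_Icc.image_of_continuousOn hc).bddAbove
      (mem_image_of_mem _ hs)
  have hM0 : ∀ i < p, (0:ℝ) ≤ M i := fun i hip =>
    le_trans (norm_nonneg _) (hMb i hip 0 ⟨le_refl 0, hT.le⟩)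
  -- extract component derivatives
  have hxd2 : ∀ u ∈ Icc (0:ℝ) T,
      HasDerivAt (fun s => N ((x s).2)) ((x u).2 + (δ u).2) u := by
    intro u hu
    obtain ⟨hdom, hder⟩ := hx u hu
    have h3 := (ContinuousLinearMap.snd ℝ Y1 Y2).hasFDerivAt.comp_hasDerivAt u hder
    simpa [Function.comp_def] using h3
  have hxd1 : ∀ u ∈ Icc (0:ℝ) T, ∃ h : (x u).1 ∈ A₁.domain,
      HasDerivAt (fun s => (x s).1) (A₁ ⟨(x u).1, h⟩ + (δ u).1) u := by
    intro u hu
    obtain ⟨hdom, hder⟩ := hx u hu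
    refine ⟨hdom, ?_⟩
    have h3 := (ContinuousLinearMap.fst ℝ Y1 Y2).hasFDerivAt.comp_hasDerivAt u hder
    simpa [Function.comp_def] using h3
  -- the nilpotent part : explicit representation of x₂
  have hrep : ∀ j ≤ p, ∀ u ∈ Icc (0:ℝ) T,
      (N ^ (p - j)) ((x u).2)
        = -∑ i ∈ Finset.range j, (N ^ (p - j + i)) ((iteratedDeriv i δ u).2) := by
    intro j
    induction j with
    | zero => intro _ u hu; simp [hN]
    | succ j ih =>
      intro hjp u hu
      have hj : j ≤ p := Nat.le_of_succ_le hjp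
      have hjp' : j < p := hjp
      set f : ℝ → Y2 := fun s => (N ^ (p - j)) ((x s).2) with hf
      set g : ℝ → Y2 :=
        fun s => -∑ i ∈ Finset.range j, (N ^ (p - j + i)) ((iteratedDeriv i δ s).2) with hg
      have hfg : EqOn f g (Icc 0 T) := fun s hs => ih hj s hs
      have hfd : ∀ v ∈ Icc (0:ℝ) T, HasDerivAt f ((N ^ (p - j - 1)) ((x v).2 + (δ v).2)) v := by
        intro v hv
        have h2 := hxd2 v hv
        have h3 := ((N ^ (p - j - 1)).restrictScalars ℝ).hasFDerivAt.comp_hasDerivAt v h2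
        have hfun : f = fun s => (N ^ (p - j - 1)) (N ((x s).2)) := by
          funext s
          show (N ^ (p - j)) ((x s).2) = (N ^ (p - j - 1)) (N ((x s).2))
          conv_lhs => rw [show p - j = (p - j - 1) + 1 from by omega]
          rw [pow_succ, ContinuousLinearMap.mul_apply]
        rw [hfun]
        exact h3
      have hgd : HasDerivAt g
          (-∑ i ∈ Finset.range j, (N ^ (p - j + i)) ((iteratedDeriv (i + 1) δ u).2)) u := by
        apply HasDerivAt.neg
        apply HasDerivAt.fun_sum
        intro i hi
        have hip : (i : WithTop ℕ∞) < (↑(p - 1) : ℕ) := by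
          exact_mod_cast Nat.lt_of_lt_of_le (Finset.mem_range.1 hi) (by omega)
        have hdi : HasDerivAt (iteratedDeriv i δ) (iteratedDeriv (i + 1) δ u) u := by
          have hdiff := (hδ.differentiable_iteratedDeriv i hip) u
          have := hdiff.hasDerivAt
          rwa [iteratedDeriv_succ]
        have h3 := (((N ^ (p - j + i)).restrictScalars ℝ).comp
          (ContinuousLinearMap.snd ℝ Y1 Y2)).hasFDerivAt.comp_hasDerivAt u hdi
        simpa [Function.comp_def] using h3
      have hud : UniqueDiffWithinAt ℝ (Icc (0:ℝ) T) u := uniqueDiffOn_Icc hT u hu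
      have e1 := ((hfd u hu).hasDerivWithinAt).derivWithin hud
      have e2 := (hgd.hasDerivWithinAt).derivWithin hud
      have heq : derivWithin f (Icc (0:ℝ) T) u = derivWithin g (Icc (0:ℝ) T) u :=
        derivWithin_congr hfg (hfg hu)
      have hvals : (N ^ (p - j - 1)) ((x u).2 + (δ u).2)
          = -∑ i ∈ Finset.range j, (N ^ (p - j + i)) ((iteratedDeriv (i + 1) δ u).2) := by
        rw [← e1, heq, e2]
      have hsplit : (N ^ (p - (j+1))) ((x u).2)
          = -∑ i ∈ Finset.range j, (N ^ (p - j + i)) ((iteratedDeriv (i + 1) δ u).2)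
            - (N ^ (p - (j+1))) ((δ u).2) := by
        have : p - (j+1) = p - j - 1 := by omega
        rw [this]
        rw [map_add] at hvals
        exact eq_sub_of_add_eq hvals
      rw [hsplit, Finset.sum_range_succ']
      have hterm : ∀ i ∈ Finset.range j,
          (N ^ (p - (j+1) + (i+1))) ((iteratedDeriv (i+1) δ u).2)
            = (N ^ (p - j + i)) ((iteratedDeriv (i+1) δ u).2) := by
        intro i _
        congr 2
        omega
      rw [Finset.sum_congr rfl hterm]
      simp only [iteratedDeriv_zero, sub_eq_add_neg, neg_add, Nat.add_zero]
  have hx2 : ∀ u ∈ Icc (0:ℝ) T,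
      (x u).2 = -∑ i ∈ Finset.range p, (N ^ i) ((iteratedDeriv i δ u).2) := by
    intro u hu
    have := hrep p le_rfl u hu
    rw [Nat.sub_self] at this
    simpa using this
  -- bound on the second component
  have hb2 : ‖(x t).2‖ ≤ K * ∑ i ∈ Finset.range p, M i := by
    rw [hx2 t ht, norm_neg]
    refine le_trans (norm_sum_le _ _) ?_
    rw [Finset.mul_sum]
    refine Finset.sum_le_sum fun i hi => ?_
    have h1 : ‖(N ^ i) ((iteratedDeriv i δ t).2)‖ ≤ ‖N ^ i‖ * ‖iteratedDeriv i δ t‖ :=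
      le_trans ((N ^ i).le_opNorm _)
        (mul_le_mul_of_nonneg_left (norm_snd_le _) (norm_nonneg _))
    have h2 : ‖iteratedDeriv i δ t‖ ≤ M i := hMb i (Finset.mem_range.1 hi) t ht
    have h3 : ‖N ^ i‖ ≤ K :=
      Finset.single_le_sum (f := fun i => ‖N ^ i‖) (fun i _ => norm_nonneg _) hi
    calc ‖(N ^ i) ((iteratedDeriv i δ t).2)‖
        ≤ ‖N ^ i‖ * M i := le_trans h1
          (mul_le_mul_of_nonneg_left h2 (norm_nonneg _))
      _ ≤ K * M i := mul_le_mul_of_nonneg_right h3 (hM0 i (Finset.mem_range.1 hi))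
  -- variation of constants bound on the first component
  have hgder : ∀ s ∈ Icc (0:ℝ) t, HasDerivWithinAt (fun u => S (t - u) ((x u).1))
      (S (t - s) ((δ s).1)) (Icc (0:ℝ) t) s := by
    intro s hs
    have hsT : s ∈ Icc (0:ℝ) T := ⟨hs.1, hs.2.trans ht.2⟩
    obtain ⟨hdom, hder1⟩ := hxd1 s hsT
    set w := (x s).1 with hw
    set a := A₁ ⟨w, hdom⟩ with ha
    have h2' : (0:ℝ) ≤ t - s := by linarith [hs.2]
    rw [hasDerivWithinAt_iff_tendsto_slope]
    have hsplit : Icc (0:ℝ) t \ {s} = (Icc (0:ℝ) t ∩ Iio s) ∪ (Icc (0:ℝ) t ∩ Ioi s) := by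
      ext u
      simp only [mem_diff, mem_singleton_iff, mem_union, mem_inter_iff, mem_Iio, mem_Ioi]
      constructor
      · rintro ⟨h1, h2⟩
        rcases lt_or_gt_of_ne h2 with h | h
        exacts [Or.inl ⟨h1, h⟩, Or.inr ⟨h1, h⟩]
      · rintro (⟨h1, h⟩ | ⟨h1, h⟩)
        exacts [⟨h1, h.ne⟩, ⟨h1, h.ne'⟩]
    rw [hsplit, nhdsWithin_union, tendsto_sup]
    constructor
    · -- left piece : u < s
      set l := nhdsWithin s (Icc (0:ℝ) t ∩ Iio s) with hl
      have hslope : Tendsto (slope (fun u => (x u).1) s) l (nhds (a + (δ s).1)) :=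
        (hasDerivAt_iff_tendsto_slope.1 hder1).mono_left
          (nhdsWithin_mono s (fun u hu => mem_compl_singleton_iff.2 hu.2.ne))
      have hsu : Tendsto (fun u => s - u) l (nhdsWithin 0 (Ioi 0)) := by
        apply tendsto_nhdsWithin_iff.2
        constructor
        · have h0 : Tendsto (fun u : ℝ => s - u) (nhds s) (nhds (s - s)) :=
            tendsto_const_nhds.sub tendsto_id
          rw [sub_self] at h0
          exact h0.mono_left nhdsWithin_le_nhds
        · refine eventually_mem_nhdsWithin.mono fun u hu => ?_
          have hus : u < s := hu.2
          simp only [mem_Ioi, sub_pos]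
          exact hus
      have hq : Tendsto (fun u => (s - u)⁻¹ • (S (s - u) w - w)) l (nhds a) :=
        (hSgen ⟨w, hdom⟩).comp hsu
      have h1 : Tendsto (fun u => S (s - u) (S (t - s) (slope (fun v => (x v).1) s u))) l
          (nhds (S (t - s) (a + (δ s).1))) := by
        have hv : Tendsto (fun u => S (t - s) (slope (fun v => (x v).1) s u)) l
            (nhds (S (t - s) (a + (δ s).1))) := ((S (t - s)).continuous.tendsto _).comp hslope
        have hev : ∀ᶠ u in l, s - u ∈ Icc (0:ℝ) T := by
          refine eventually_mem_nhdsWithin.mono fun u hu => ?_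
          have hus : u < s := hu.2
          have hu0 : (0:ℝ) ≤ u := hu.1.1
          exact ⟨by linarith, by linarith [hs.2, ht.2]⟩
        have h0 := key l (fun u => s - u) (fun u => S (t - s) (slope (fun v => (x v).1) s u)) 0
          (S (t - s) (a + (δ s).1)) ⟨le_refl 0, hT.le⟩ (hsu.mono_right nhdsWithin_le_nhds) hev hv
        rwa [hS0, ContinuousLinearMap.one_apply] at h0
      have h2 : Tendsto (fun u => S (t - s) ((s - u)⁻¹ • (S (s - u) w - w))) l
          (nhds (S (t - s) a)) := ((S (t - s)).continuous.tendsto _).comp hq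
      have h3 := h1.sub h2
      rw [show S (t - s) (a + (δ s).1) - S (t - s) a = S (t - s) ((δ s).1) from by
        rw [map_add]; abel] at h3
      refine h3.congr' ?_
      filter_upwards [eventually_mem_nhdsWithin] with u hu
      have hu0 : (0:ℝ) ≤ u := hu.1.1
      have hus : u < s := hu.2
      have d1 : (0:ℝ) ≤ s - u := by linarith
      have comp1 : S (t - u) ((x u).1) = S (s - u) (S (t - s) ((x u).1)) := by
        rw [show t - u = (s - u) + (t - s) from by ring, hSadd _ _ d1 h2']; rfl
      have comm : S (t - s) (S (s - u) w) = S (s - u) (S (t - s) w) := by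
        have e1 := hSadd (s - u) (t - s) d1 h2'
        have e2 := hSadd (t - s) (s - u) h2' d1
        calc S (t - s) (S (s - u) w) = S ((t - s) + (s - u)) w := by rw [e2]; rfl
          _ = S ((s - u) + (t - s)) w := by rw [add_comm]
          _ = S (s - u) (S (t - s) w) := by rw [e1]; rfl
      have hinv : (s - u)⁻¹ = -(u - s)⁻¹ := by
        rw [show s - u = -(u - s) from by ring, inv_neg]
      simp only [slope_def_module, comp1, ← hw, map_sub,
        ContinuousLinearMap.map_smul_of_tower, hinv, comm]
      module
    · -- right piece : u > s
      set l := nhdsWithin s (Icc (0:ℝ) t ∩ Ioi s) with hl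
      have hslope : Tendsto (slope (fun u => (x u).1) s) l (nhds (a + (δ s).1)) :=
        (hasDerivAt_iff_tendsto_slope.1 hder1).mono_left
          (nhdsWithin_mono s (fun u hu => mem_compl_singleton_iff.2 hu.2.ne'))
      have hsu : Tendsto (fun u => u - s) l (nhdsWithin 0 (Ioi 0)) := by
        apply tendsto_nhdsWithin_iff.2
        constructor
        · have h0 : Tendsto (fun u : ℝ => u - s) (nhds s) (nhds (s - s)) :=
            tendsto_id.sub tendsto_const_nhds
          rw [sub_self] at h0
          exact h0.mono_left nhdsWithin_le_nhds
        · refine eventually_mem_nhdsWithin.mono fun u hu => ?_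
          have hus : s < u := hu.2
          simp only [mem_Ioi, sub_pos]
          exact hus
      have hq : Tendsto (fun u => (u - s)⁻¹ • (S (u - s) w - w)) l (nhds a) :=
        (hSgen ⟨w, hdom⟩).comp hsu
      have hv : Tendsto (fun u => slope (fun v => (x v).1) s u
          - (u - s)⁻¹ • (S (u - s) w - w)) l (nhds (a + (δ s).1 - a)) := hslope.sub hq
      have hr : Tendsto (fun u => t - u) l (nhds (t - s)) := by
        have h0 : Tendsto (fun u : ℝ => t - u) (nhds s) (nhds (t - s)) :=
          tendsto_const_nhds.sub tendsto_id
        exact h0.mono_left nhdsWithin_le_nhds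
      have hev : ∀ᶠ u in l, t - u ∈ Icc (0:ℝ) T := by
        refine eventually_mem_nhdsWithin.mono fun u hu => ?_
        have hut : u ≤ t := hu.1.2
        have hu0 : (0:ℝ) ≤ u := hu.1.1
        exact ⟨by linarith, by linarith [ht.2]⟩
      have h0 := key l (fun u => t - u)
        (fun u => slope (fun v => (x v).1) s u - (u - s)⁻¹ • (S (u - s) w - w)) (t - s)
        (a + (δ s).1 - a) ⟨h2', by linarith [hs.1, ht.2]⟩ hr hev hv
      rw [show a + (δ s).1 - a = (δ s).1 from by abel] at h0
      refine h0.congr' ?_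
      filter_upwards [eventually_mem_nhdsWithin] with u hu
      have hsu' : s < u := hu.2
      have d1 : (0:ℝ) ≤ u - s := by linarith
      have d2 : (0:ℝ) ≤ t - u := by
        have hut : u ≤ t := hu.1.2
        linarith
      have comp1 : S (t - s) w = S (t - u) (S (u - s) w) := by
        rw [show t - s = (t - u) + (u - s) from by ring, hSadd _ _ d2 d1]; rfl
      simp only [slope_def_module, ← hw, comp1, map_sub,
        ContinuousLinearMap.map_smul_of_tower]
      module
  have hbound : ∀ s ∈ Ico (0:ℝ) t, ‖S (t - s) ((δ s).1)‖ ≤ c₁ * M 0 := by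
    intro s hs
    have hsT : s ∈ Icc (0:ℝ) T := ⟨hs.1, le_trans hs.2.le ht.2⟩
    have hts : t - s ∈ Icc (0:ℝ) T := ⟨by linarith [hs.2.le], by linarith [hs.1, ht.2]⟩
    have hd : ‖(δ s).1‖ ≤ M 0 := by
      refine le_trans (norm_fst_le _) ?_
      have := hMb 0 hp s hsT
      rwa [iteratedDeriv_zero] at this
    calc ‖S (t - s) ((δ s).1)‖ ≤ ‖S (t - s)‖ * ‖(δ s).1‖ := (S (t - s)).le_opNorm _
      _ ≤ c₁ * M 0 := mul_le_mul (hSb _ hts) hd (norm_nonneg _) hc₁0.le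
  have hmv := norm_image_sub_le_of_norm_deriv_le_segment' hgder hbound t
    (right_mem_Icc.2 ht.1)
  have hb1 : ‖(x t).1‖ ≤ c₁ * ‖(x 0).1‖ + (c₁ * M 0) * T := by
    have e_t : S (t - t) ((x t).1) = (x t).1 := by
      rw [sub_self, hS0]; rfl
    have e_0 : S (t - 0) ((x 0).1) = S t ((x 0).1) := by rw [sub_zero]
    rw [e_t, e_0, sub_zero] at hmv
    have h4 : ‖(x t).1‖ ≤ ‖S t ((x 0).1)‖ + c₁ * M 0 * t := by
      have h5 := norm_add_le ((x t).1 - S t ((x 0).1)) (S t ((x 0).1))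
      rw [sub_add_cancel] at h5
      exact le_trans h5 (by linarith)
    have h6 : ‖S t ((x 0).1)‖ ≤ c₁ * ‖(x 0).1‖ :=
      le_trans ((S t).le_opNorm _) (mul_le_mul_of_nonneg_right (hSb t ht) (norm_nonneg _))
    have h7 : c₁ * M 0 * t ≤ c₁ * M 0 * T :=
      mul_le_mul_of_nonneg_left ht.2 (mul_nonneg hc₁0.le (hM0 0 hp))
    linarith
  -- combine
  have hMsum0 : (0:ℝ) ≤ ∑ i ∈ Finset.range p, M i :=
    Finset.sum_nonneg fun i hi => hM0 i (Finset.mem_range.1 hi)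
  set B : ℝ := ‖x 0‖ + ∑ i ∈ Finset.range p, M i with hBdef
  have hx0B : ‖(x 0).1‖ ≤ B := le_trans (norm_fst_le _) (le_add_of_nonneg_right hMsum0)
  have hM0B : M 0 ≤ B := by
    have h1 : M 0 ≤ ∑ i ∈ Finset.range p, M i :=
      Finset.single_le_sum (f := M) (fun i hi => hM0 i (Finset.mem_range.1 hi))
        (Finset.mem_range.2 hp)
    have h2 : (∑ i ∈ Finset.range p, M i) ≤ B := le_add_of_nonneg_left (norm_nonneg _)
    linarith
  have hSB : (∑ i ∈ Finset.range p, M i) ≤ B := le_add_of_nonneg_left (norm_nonneg _)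
  have e1 : c₁ * ‖(x 0).1‖ ≤ c₁ * B := mul_le_mul_of_nonneg_left hx0B hc₁0.le
  have e2 : (c₁ * M 0) * T ≤ (c₁ * B) * T :=
    mul_le_mul_of_nonneg_right (mul_le_mul_of_nonneg_left hM0B hc₁0.le) hT.le
  have e3 : K * (∑ i ∈ Finset.range p, M i) ≤ K * B := mul_le_mul_of_nonneg_left hSB hK0
  have hmax : ‖x t‖ ≤ ‖(x t).1‖ + ‖(x t).2‖ := by
    rw [Prod.norm_def]
    exact max_le (le_add_of_nonneg_right (norm_nonneg _))
      (le_add_of_nonneg_left (norm_nonneg _))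
  calc ‖x t‖ ≤ ‖(x t).1‖ + ‖(x t).2‖ := hmax
    _ ≤ (c₁ * ‖(x 0).1‖ + (c₁ * M 0) * T) + K * ∑ i ∈ Finset.range p, M i :=
        add_le_add hb1 hb2
    _ ≤ (c₁ * B + (c₁ * B) * T) + K * B := by linarith
    _ = (c₁ * (1 + T) + K) * B := by ring
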